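/- There exists an enriched quantum logic (S, Δ) on a set S with 10 elements and a map s : Δ → {0,1} such that: (i) s is a state on (S, Δ); (ii) s is a ℤ₂-state on (S, Δ) (identifying {0,1} with ℤ/2ℤ); (iii) s has no extension to a two-valued finitely additive state on the full power set of S, i.e., there is no t : exp S → {0,1} with t(S) = 1, t additive on disjoint unions, and t(A) = s(A) for all A ∈ Δ; and (iv) s does have an extension to a ℤ₂-state on the full power set of S. Such an example is obtained with S = {1,…,10} and Δ generated (under symmetric difference, together with S) by the sets A = {2,3,4,5}, B = {4,6,8,9}, C = {1,2,4,8}, D = {4,5,6,7}. -/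
import Mathlib


open scoped symmDiff

/-- An enriched quantum logic (EQL) on a (nonempty) set `S` (here: the type `α`):
a collection `Δ` of subsets containing the whole set and closed under symmetric
difference. -/
def IsEQL {α : Type*} (Δ : Set (Set α)) : Prop :=
  Set.univ ∈ Δ ∧ ∀ A ∈ Δ, ∀ B ∈ Δ, A ∆ B ∈ Δ

/-- A state on an EQL `(S, Δ)`: a `[0,1]`-valued map, normalized, additive on
disjoint pairs of `Δ`, and subadditive with respect to symmetric difference. -/
def IsState {α : Type*} (Δ : Set (Set α)) (s : Set α → ℝ) : Prop :=
  (∀ A ∈ Δ, s A ∈ Set.Icc (0 : ℝ) 1) ∧ s Set.univ = 1 ∧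
    (∀ A ∈ Δ, ∀ B ∈ Δ, A ∩ B = ∅ → s (A ∪ B) = s A + s B) ∧
    (∀ A ∈ Δ, ∀ B ∈ Δ, s (A ∆ B) ≤ s A + s B)

/-- A `ℤ₂`-state on an EQL `(S, Δ)`. -/
def IsZ2State {α : Type*} (Δ : Set (Set α)) (s : Set α → ZMod 2) : Prop :=
  s Set.univ = 1 ∧ ∀ A ∈ Δ, ∀ B ∈ Δ, s (A ∆ B) = s A + s B

/-- The collection generated by a family `M` of subsets together with the
whole set, under symmetric difference. -/
inductive SDGen {α : Type*} (M : Set (Set α)) : Set α → Prop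
  | base {A : Set α} : A ∈ M → SDGen M A
  | univ : SDGen M Set.univ
  | sdiff {A B : Set α} : SDGen M A → SDGen M B → SDGen M (A ∆ B)

namespace Stmt16Aux

/-- The subset of `Fin 10` encoded by the bits of `n`. -/
def mset (n : ℕ) : Set (Fin 10) := {i : Fin 10 | n.testBit i.val}

open Classical in
/-- Parity of the intersection with `{0, 1, 4}`, as an element of `ℤ/2ℤ`. -/
noncomputable def v2 (X : Set (Fin 10)) : ZMod 2 :=
  (if (0 : Fin 10) ∈ X then 1 else 0) + (if (1 : Fin 10) ∈ X then 1 else 0) +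
    (if (4 : Fin 10) ∈ X then 1 else 0)

/-- Parity of bits `0`, `1`, `4` of a mask. -/
def chi (n : ℕ) : ZMod 2 :=
  (if n.testBit 0 then 1 else 0) + (if n.testBit 1 then 1 else 0) +
    (if n.testBit 4 then 1 else 0)

/-- Masks of the 32 sets of the EQL generated by
`{2,3,4,5}, {4,6,8,9}, {1,2,4,8}, {4,5,6,7}` and the whole set. -/
def L : List ℕ := [0, 60, 95, 99, 147, 175, 204, 240, 278, 298, 329, 373, 389, 441,
  474, 486, 537, 549, 582, 634, 650, 694, 725, 745, 783, 819, 848, 876, 924, 928, 963, 1023]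

lemma L_xor : ∀ m ∈ L, ∀ n ∈ L, (m ^^^ n) ∈ L := by decide

lemma L_chi : ∀ m ∈ L, ∀ n ∈ L, chi m = 1 → chi n = 1 →
    ∃ i : Fin 10, (m &&& n).testBit i.val := by decide

lemma mset_symmDiff (m n : ℕ) : mset m ∆ mset n = mset (m ^^^ n) := by
  ext i
  simp only [mset, Set.mem_symmDiff, Set.mem_setOf_eq, Nat.testBit_xor]
  cases hm : m.testBit i.val <;> cases hn : n.testBit i.val <;> simp

lemma mset_inter (m n : ℕ) : mset m ∩ mset n = mset (m &&& n) := by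
  ext i
  simp [mset, Nat.testBit_and]

lemma mset_zero : mset 0 = ∅ := by
  ext i; simp [mset]

lemma gA : ({2, 3, 4, 5} : Set (Fin 10)) = mset 60 := by
  ext i; fin_cases i <;> simp [mset] <;> decide

lemma gB : ({4, 6, 8, 9} : Set (Fin 10)) = mset 848 := by
  ext i; fin_cases i <;> simp [mset] <;> decide

lemma gC : ({1, 2, 4, 8} : Set (Fin 10)) = mset 278 := by
  ext i; fin_cases i <;> simp [mset] <;> decide

lemma gD : ({4, 5, 6, 7} : Set (Fin 10)) = mset 240 := by
  ext i; fin_cases i <;> simp [mset] <;> decide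

lemma gU : (Set.univ : Set (Fin 10)) = mset 1023 := by
  ext i; fin_cases i <;> simp [mset] <;> decide

lemma v2_mset (n : ℕ) : v2 (mset n) = chi n := by
  by_cases h0 : n.testBit 0 <;> by_cases h1 : n.testBit 1 <;> by_cases h4 : n.testBit 4 <;>
    simp [v2, chi, mset, h0, h1, h4, show ((4:Fin 10):ℕ) = 4 from rfl,
      show ((0:Fin 10):ℕ) = 0 from rfl, show ((1:Fin 10):ℕ) = 1 from rfl]

lemma v2_symmDiff (X Y : Set (Fin 10)) : v2 (X ∆ Y) = v2 X + v2 Y := by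
  by_cases h1 : (0:Fin 10) ∈ X <;> by_cases h2 : (1:Fin 10) ∈ X <;>
  by_cases h3 : (4:Fin 10) ∈ X <;> by_cases h4 : (0:Fin 10) ∈ Y <;>
  by_cases h5 : (1:Fin 10) ∈ Y <;> by_cases h6 : (4:Fin 10) ∈ Y <;>
    simp [v2, Set.mem_symmDiff, h1, h2, h3, h4, h5, h6] <;> decide

lemma v2_univ : v2 Set.univ = 1 := by
  simp [v2]; decide

/-- The generating family from the statement. -/
def Mgen : Set (Set (Fin 10)) := {{2, 3, 4, 5}, {4, 6, 8, 9}, {1, 2, 4, 8}, {4, 5, 6, 7}}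

lemma span {X : Set (Fin 10)} (h : SDGen Mgen X) : ∃ n ∈ L, X = mset n := by
  induction h with
  | base hA =>
    simp only [Mgen, Set.mem_insert_iff, Set.mem_singleton_iff] at hA
    rcases hA with rfl | rfl | rfl | rfl
    · exact ⟨60, by decide, gA⟩
    · exact ⟨848, by decide, gB⟩
    · exact ⟨278, by decide, gC⟩
    · exact ⟨240, by decide, gD⟩
  | univ => exact ⟨1023, by decide, gU⟩
  | sdiff hA hB ihA ihB =>
    obtain ⟨m, hm, rfl⟩ := ihA
    obtain ⟨n, hn, rfl⟩ := ihB
    exact ⟨m ^^^ n, L_xor m hm n hn, mset_symmDiff m n⟩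

lemma zcases : ∀ z : ZMod 2, z = 0 ∨ z = 1 := by decide
lemma val_le : ∀ z : ZMod 2, z.val ≤ 1 := by decide
lemma val_add_le : ∀ a b : ZMod 2, (a + b).val ≤ a.val + b.val := by decide
lemma val_add_eq : ∀ a b : ZMod 2, ¬(a = 1 ∧ b = 1) → (a + b).val = a.val + b.val := by decide

lemma not_both {X Y : Set (Fin 10)} (hX : SDGen Mgen X) (hY : SDGen Mgen Y)
    (hXY : X ∩ Y = ∅) : ¬(v2 X = 1 ∧ v2 Y = 1) := by
  rintro ⟨h1, h2⟩
  obtain ⟨m, hm, rfl⟩ := span hX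
  obtain ⟨n, hn, rfl⟩ := span hY
  rw [v2_mset] at h1 h2
  obtain ⟨i, hi⟩ := L_chi m hm n hn h1 h2
  have hmem : i ∈ mset m ∩ mset n := by rw [mset_inter]; exact hi
  rw [hXY] at hmem
  exact hmem

lemma union_eq_symmDiff {X Y : Set (Fin 10)} (h : X ∩ Y = ∅) : X ∪ Y = X ∆ Y := by
  ext i
  have hi : i ∉ X ∩ Y := by rw [h]; exact not_false
  simp only [Set.mem_inter_iff] at hi
  simp only [Set.mem_union, Set.mem_symmDiff]
  tauto

end Stmt16Aux

/-- On a ten-element set `S = {1, …, 10}`, the EQL `Δ` generated by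
`A = {2,3,4,5}`, `B = {4,6,8,9}`, `C = {1,2,4,8}`, `D = {4,5,6,7}` carries a
two-valued state `s` which is simultaneously a `ℤ₂`-state (via the
identification of `{0,1}` with `ℤ/2ℤ`), such that `s` has no extension to a
two-valued finitely additive state on the power set of `S`, while its
`ℤ₂`-state companion does extend to a `ℤ₂`-state on the power set of `S`. -/
theorem stmt16 :
    ∃ Δ : Set (Set (Fin 10)),
      Δ = {X : Set (Fin 10) |
            SDGen ({{2, 3, 4, 5}, {4, 6, 8, 9}, {1, 2, 4, 8}, {4, 5, 6, 7}} :
              Set (Set (Fin 10))) X} ∧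
      IsEQL Δ ∧
      ∃ (s : Set (Fin 10) → ℝ) (s₂ : Set (Fin 10) → ZMod 2),
        (∀ X ∈ Δ, (s X = 0 ∧ s₂ X = 0) ∨ (s X = 1 ∧ s₂ X = 1)) ∧
        IsState Δ s ∧
        IsZ2State Δ s₂ ∧
        (¬ ∃ t : Set (Fin 10) → ℝ, t Set.univ = 1 ∧
            (∀ X : Set (Fin 10), t X = 0 ∨ t X = 1) ∧
            (∀ X Y : Set (Fin 10), X ∩ Y = ∅ → t (X ∪ Y) = t X + t Y) ∧
            ∀ X ∈ Δ, t X = s X) ∧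
        (∃ v : Set (Fin 10) → ZMod 2, v Set.univ = 1 ∧
            (∀ X Y : Set (Fin 10), v (X ∆ Y) = v X + v Y) ∧
            ∀ X ∈ Δ, v X = s₂ X) := by
  open Stmt16Aux in
  refine ⟨{X : Set (Fin 10) | SDGen Mgen X}, rfl,
    ⟨SDGen.univ, fun A hA B hB => SDGen.sdiff hA hB⟩,
    fun X => ((v2 X).val : ℝ), v2, ?_, ⟨?_, ?_, ?_, ?_⟩, ⟨v2_univ, fun A _ B _ => v2_symmDiff A B⟩,
    ?_, ⟨v2, v2_univ, fun X Y => v2_symmDiff X Y, fun X _ => rfl⟩⟩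
  · -- two-valuedness
    intro X _
    rcases Stmt16Aux.zcases (v2 X) with h | h
    · left; exact ⟨by simp [h], h⟩
    · right; exact ⟨by simp [h, ZMod.val_one], h⟩
  · -- bounds
    intro A _
    refine ⟨by positivity, ?_⟩
    show ((v2 A).val : ℝ) ≤ 1
    exact_mod_cast Stmt16Aux.val_le (v2 A)
  · -- normalization
    show ((v2 Set.univ).val : ℝ) = 1
    rw [Stmt16Aux.v2_univ]
    simp [ZMod.val_one]
  · -- additivity
    intro A hA B hB hAB
    have h2 : v2 (A ∪ B) = v2 A + v2 B := by
      rw [Stmt16Aux.union_eq_symmDiff hAB, Stmt16Aux.v2_symmDiff]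
    have h3 := Stmt16Aux.val_add_eq (v2 A) (v2 B) (Stmt16Aux.not_both hA hB hAB)
    show ((v2 (A ∪ B)).val : ℝ) = ((v2 A).val : ℝ) + ((v2 B).val : ℝ)
    rw [h2, h3]
    push_cast
    ring
  · -- subadditivity
    intro A _ B _
    show ((v2 (A ∆ B)).val : ℝ) ≤ ((v2 A).val : ℝ) + ((v2 B).val : ℝ)
    rw [Stmt16Aux.v2_symmDiff]
    exact_mod_cast Stmt16Aux.val_add_le (v2 A) (v2 B)
  · -- no two-valued additive extension
    rintro ⟨t, htu, ht01, htadd, hts⟩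
    have hempty : t ∅ = 0 := by
      have h := htadd ∅ ∅ (by simp)
      simp only [Set.union_empty] at h
      linarith
    have hinter : ∀ X Y : Set (Fin 10), t X = 1 → t Y = 1 → t (X ∩ Y) = 1 := by
      intro X Y hX hY
      have d1 : (X ∩ Y) ∩ (X \ Y) = ∅ := by
        ext i; simp only [Set.mem_inter_iff, Set.mem_diff, Set.mem_empty_iff_false, iff_false]
        tauto
      have e1 : t X = t (X ∩ Y) + t (X \ Y) := by
        have h := htadd (X ∩ Y) (X \ Y) d1
        rwa [Set.inter_union_diff] at h
      have d2 : (X \ Y) ∩ Y = ∅ := by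
        ext i; simp only [Set.mem_inter_iff, Set.mem_diff, Set.mem_empty_iff_false, iff_false]
        tauto
      have e2 : t (X ∪ Y) = t (X \ Y) + t Y := by
        have h := htadd (X \ Y) Y d2
        rwa [Set.diff_union_self] at h
      have hub : t (X ∪ Y) ≤ 1 := by rcases ht01 (X ∪ Y) with h | h <;> linarith
      rcases ht01 (X ∩ Y) with h | h
      · linarith
      · exact h
    have hmemA : ({2, 3, 4, 5} : Set (Fin 10)) ∈ Mgen := Set.mem_insert _ _
    have hmemB : ({4, 6, 8, 9} : Set (Fin 10)) ∈ Mgen := by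
      right; left; rfl
    have hmemC : ({1, 2, 4, 8} : Set (Fin 10)) ∈ Mgen := by
      right; right; left; rfl
    have m1 : SDGen Mgen (mset 60) := by
      rw [← Stmt16Aux.gA]; exact SDGen.base hmemA
    have m2 : SDGen Mgen (mset 147) := by
      have h := SDGen.sdiff (SDGen.sdiff (SDGen.base hmemA) (SDGen.base hmemB)) SDGen.univ
      have e : ({2, 3, 4, 5} : Set (Fin 10)) ∆ {4, 6, 8, 9} ∆ Set.univ = mset 147 := by
        rw [Stmt16Aux.gA, Stmt16Aux.gB, Stmt16Aux.gU, Stmt16Aux.mset_symmDiff,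
          Stmt16Aux.mset_symmDiff]
        congr 1
      rwa [e] at h
    have m3 : SDGen Mgen (mset 298) := by
      have h := SDGen.sdiff (SDGen.base hmemA) (SDGen.base hmemC)
      have e : ({2, 3, 4, 5} : Set (Fin 10)) ∆ {1, 2, 4, 8} = mset 298 := by
        rw [Stmt16Aux.gA, Stmt16Aux.gC, Stmt16Aux.mset_symmDiff]
        congr 1
      rwa [e] at h
    have tval : ∀ n : ℕ, SDGen Mgen (mset n) → chi n = 1 → t (mset n) = 1 := by
      intro n hn hchi
      have h := hts (mset n) hn
      rw [h]
      show ((v2 (mset n)).val : ℝ) = 1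
      rw [Stmt16Aux.v2_mset, hchi]
      simp [ZMod.val_one]
    have t1 : t (mset 60) = 1 := tval 60 m1 (by decide)
    have t2 : t (mset 147) = 1 := tval 147 m2 (by decide)
    have t3 : t (mset 298) = 1 := tval 298 m3 (by decide)
    have h12 := hinter _ _ t1 t2
    have h123 := hinter _ _ h12 t3
    have hempty3 : mset 60 ∩ mset 147 ∩ mset 298 = (∅ : Set (Fin 10)) := by
      rw [Stmt16Aux.mset_inter, Stmt16Aux.mset_inter,
        show (60 &&& 147 &&& 298 : ℕ) = 0 by decide, Stmt16Aux.mset_zero]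
    rw [hempty3, hempty] at h123
    norm_num at h123
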